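/- For measurable nonnegative functions f_{01}, f_{10}, f_{11} in L^{3/2}(ℝ^d), the 2nd cubic convolution product D_2(f_{01},f_{10},f_{11})(x) = ∫∫ f_{01}(x+t_1) f_{10}(x+t_2) f_{11}(x+t_1+t_2) dt_1 dt_2 satisfies the pointwise bound D_2(f_{01},f_{10},f_{11})(x) ≤ C · ‖f_{01}‖_{3/2} ‖f_{10}‖_{3/2} ‖f_{11}‖_{3/2} for some constant C depending only on d and for every x ∈ ℝ^d. -/

import Mathlib

open MeasureTheory Filter
open scoped ENNReal

noncomputable section

/-- The zero vertex of the discrete cube `{0,1}^k`. -/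
def vzero (k : ℕ) : Fin k → Bool := fun _ => false

/-- `α · h = α₁ h₁ + ⋯ + α_k h_k` for a vertex `α ∈ {0,1}^k` and `h ∈ (ℝ^d)^k`. -/
def dotB {k d : ℕ} (α : Fin k → Bool) (h : Fin k → Fin d → ℝ) : Fin d → ℝ :=
  ∑ i, if α i then h i else 0

/-- Generalized cubic convolution product `D_k(f_α : α ∈ Ṽ_k)(x)`. -/
def cubeD (k d : ℕ) (f : (Fin k → Bool) → (Fin d → ℝ) → ℝ) (x : Fin d → ℝ) : ℝ :=
  ∫ h : Fin k → Fin d → ℝ,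
    ∏ α ∈ Finset.univ.filter (fun α : Fin k → Bool => α ≠ vzero k), f α (x + dotB α h)

/-- The Gowers–Host–Kra dual function `D_k f`. -/
def dualFn (k d : ℕ) (f : (Fin d → ℝ) → ℝ) : (Fin d → ℝ) → ℝ :=
  cubeD k d fun _ => f

/-- The Gowers inner product `T_k(f_α : α ∈ V_k)`. -/
def gowersT (k d : ℕ) (f : (Fin k → Bool) → (Fin d → ℝ) → ℝ) : ℝ :=
  ∫ x : Fin d → ℝ, ∫ h : Fin k → Fin d → ℝ, ∏ α : Fin k → Bool, f α (x + dotB α h)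

/-- The Gowers–Host–Kra uniformity norm `‖f‖_{U(k)}`. -/
def gowersNorm (k d : ℕ) (f : (Fin d → ℝ) → ℝ) : ℝ :=
  (gowersT k d fun _ => f) ^ ((1 : ℝ) / 2 ^ k)

/-- The `L^p` norm (as a real number) of a function on `ℝ^d`. -/
def lpN (d : ℕ) (p : ℝ≥0∞) (f : (Fin d → ℝ) → ℝ) : ℝ :=
  (eLpNorm f p volume).toReal

/-- `p_k = 2^k/(k+1)`. -/
def pkR (k : ℕ) : ℝ := 2 ^ k / (k + 1)

/-- `q_k = (2^k-1)/k`. -/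
def qkR (k : ℕ) : ℝ := ((2 : ℝ) ^ k - 1) / k

/-- `s_k = 2^k/(2^k-k-1)`, the Hölder conjugate of `p_k`. -/
def skR (k : ℕ) : ℝ := 2 ^ k / (2 ^ k - k - 1)

/-- The duality pairing `⟨g, f⟩ = ∫ g f`. -/
def pair (d : ℕ) (g f : (Fin d → ℝ) → ℝ) : ℝ := ∫ x, g x * f x

/-- The set of values `|⟨g,f⟩|` over `f ∈ L^{p_k}` with `‖f‖_{U(k)} ≤ 1`. -/
def dualSet (k d : ℕ) (g : (Fin d → ℝ) → ℝ) : Set ℝ :=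
  { r | ∃ f : (Fin d → ℝ) → ℝ, MemLp f (ENNReal.ofReal (pkR k)) volume ∧
      gowersNorm k d f ≤ 1 ∧ r = |pair d g f| }

/-- The anti-uniform norm `‖g‖_{U(k)}^*`. -/
def dualNorm (k d : ℕ) (g : (Fin d → ℝ) → ℝ) : ℝ :=
  sSup (dualSet k d g)

/-- The second cubic convolution product `D₂(f₀₁, f₁₀, f₁₁)(x)`. -/
def D2 (d : ℕ) (f01 f10 f11 : (Fin d → ℝ) → ℝ) (x : Fin d → ℝ) : ℝ :=
  ∫ t1 : Fin d → ℝ, ∫ t2 : Fin d → ℝ, f01 (x + t1) * f10 (x + t2) * f11 (x + t1 + t2)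

/-- pointwise bound for `D₂` by the product of `L^{3/2}` norms. -/
theorem stmt0 (d : ℕ) :
    ∃ C : ℝ, 0 < C ∧
      ∀ f01 f10 f11 : (Fin d → ℝ) → ℝ,
        Measurable f01 → Measurable f10 → Measurable f11 →
        (∀ x, 0 ≤ f01 x) → (∀ x, 0 ≤ f10 x) → (∀ x, 0 ≤ f11 x) →
        MemLp f01 (3 / 2) volume → MemLp f10 (3 / 2) volume → MemLp f11 (3 / 2) volume →
        ∀ x : Fin d → ℝ,
          D2 d f01 f10 f11 x ≤
            C * lpN d (3 / 2) f01 * lpN d (3 / 2) f10 * lpN d (3 / 2) f11 := by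
  refine ⟨1, one_pos, ?_⟩
  intro f01 f10 f11 m01 m10 m11 h01 h10 h11 L01 L10 L11 x
  simp only [lpN]
  have hp32 : ((3 : ℝ≥0∞) / 2).toReal = 3 / 2 := by
    simp [ENNReal.toReal_div]
  set μ : Measure (Fin d → ℝ) := volume with hμ
  set π : Measure ((Fin d → ℝ) × (Fin d → ℝ)) := μ.prod μ with hπ
  -- enorm versions, centered at x
  set A : (Fin d → ℝ) → ℝ≥0∞ := fun t => (‖f01 (x + t)‖₊ : ℝ≥0∞) with hAdef
  set B : (Fin d → ℝ) → ℝ≥0∞ := fun t => (‖f10 (x + t)‖₊ : ℝ≥0∞) with hBdef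
  set Cc : (Fin d → ℝ) → ℝ≥0∞ := fun t => (‖f11 (x + t)‖₊ : ℝ≥0∞) with hCdef
  have mA : Measurable A := (m01.comp (measurable_const_add x)).enorm
  have mB : Measurable B := (m10.comp (measurable_const_add x)).enorm
  have mC : Measurable Cc := (m11.comp (measurable_const_add x)).enorm
  set φ : (Fin d → ℝ) × (Fin d → ℝ) → ℝ≥0∞ :=
    fun p => A p.1 * B p.2 * Cc (p.1 + p.2) with hφdef
  have mφ : Measurable φ :=
    ((mA.comp measurable_fst).mul (mB.comp measurable_snd)).mul
      (mC.comp (measurable_fst.add measurable_snd))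
  set I : ℝ≥0∞ := ∫⁻ p, φ p ∂π with hIdef
  -- the un-centered 3/2-power integrals
  set g1 : (Fin d → ℝ) → ℝ≥0∞ := fun y => (‖f01 y‖₊ : ℝ≥0∞) ^ ((3:ℝ)/2) with hg1
  set g2 : (Fin d → ℝ) → ℝ≥0∞ := fun y => (‖f10 y‖₊ : ℝ≥0∞) ^ ((3:ℝ)/2) with hg2
  set g3 : (Fin d → ℝ) → ℝ≥0∞ := fun y => (‖f11 y‖₊ : ℝ≥0∞) ^ ((3:ℝ)/2) with hg3
  have mg1 : Measurable g1 := m01.enorm.pow_const _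
  have mg2 : Measurable g2 := m10.enorm.pow_const _
  have mg3 : Measurable g3 := m11.enorm.pow_const _
  set T1 : ℝ≥0∞ := ∫⁻ y, g1 y ∂μ with hT1
  set T2 : ℝ≥0∞ := ∫⁻ y, g2 y ∂μ with hT2
  set T3 : ℝ≥0∞ := ∫⁻ y, g3 y ∂μ with hT3
  -- eLpNorms
  have hN1 : eLpNorm f01 (3/2) volume = T1 ^ ((2:ℝ)/3) := by
    rw [eLpNorm_eq_lintegral_rpow_enorm_toReal (by norm_num) ((ENNReal.div_lt_top (by norm_num) (by norm_num)).ne), hp32, hT1]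
    norm_num
    rfl
  have hN2 : eLpNorm f10 (3/2) volume = T2 ^ ((2:ℝ)/3) := by
    rw [eLpNorm_eq_lintegral_rpow_enorm_toReal (by norm_num) ((ENNReal.div_lt_top (by norm_num) (by norm_num)).ne), hp32, hT2]
    norm_num
    rfl
  have hN3 : eLpNorm f11 (3/2) volume = T3 ^ ((2:ℝ)/3) := by
    rw [eLpNorm_eq_lintegral_rpow_enorm_toReal (by norm_num) ((ENNReal.div_lt_top (by norm_num) (by norm_num)).ne), hp32, hT3]
    norm_num
    rfl
  -- the three Hölder factors
  set F1 : (Fin d → ℝ) × (Fin d → ℝ) → ℝ≥0∞ :=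
    fun p => (A p.1 * B p.2) ^ ((1:ℝ)/2) with hF1
  set F2 : (Fin d → ℝ) × (Fin d → ℝ) → ℝ≥0∞ :=
    fun p => (B p.2 * Cc (p.1 + p.2)) ^ ((1:ℝ)/2) with hF2
  set F3 : (Fin d → ℝ) × (Fin d → ℝ) → ℝ≥0∞ :=
    fun p => (Cc (p.1 + p.2) * A p.1) ^ ((1:ℝ)/2) with hF3
  have mF1 : Measurable F1 := ((mA.comp measurable_fst).mul (mB.comp measurable_snd)).pow_const _
  have mF2 : Measurable F2 := ((mB.comp measurable_snd).mul
    (mC.comp (measurable_fst.add measurable_snd))).pow_const _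
  have mF3 : Measurable F3 := ((mC.comp (measurable_fst.add measurable_snd)).mul
    (mA.comp measurable_fst)).pow_const _
  have halfadd : ∀ z : ℝ≥0∞, z ^ ((1:ℝ)/2) * z ^ ((1:ℝ)/2) = z := by
    intro z
    rw [← ENNReal.rpow_add_of_nonneg _ _ (by norm_num) (by norm_num)]
    norm_num
  have hsplit : ∀ p, φ p = F1 p * (F2 p * F3 p) := by
    intro p
    simp only [hF1, hF2, hF3,
      ENNReal.mul_rpow_of_nonneg _ _ (by norm_num : (0:ℝ) ≤ 1/2)]
    rw [show A p.1 ^ ((1:ℝ)/2) * B p.2 ^ ((1:ℝ)/2) *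
        (B p.2 ^ ((1:ℝ)/2) * Cc (p.1+p.2) ^ ((1:ℝ)/2) *
          (Cc (p.1+p.2) ^ ((1:ℝ)/2) * A p.1 ^ ((1:ℝ)/2)))
        = (A p.1 ^ ((1:ℝ)/2) * A p.1 ^ ((1:ℝ)/2)) *
          (B p.2 ^ ((1:ℝ)/2) * B p.2 ^ ((1:ℝ)/2)) *
          (Cc (p.1+p.2) ^ ((1:ℝ)/2) * Cc (p.1+p.2) ^ ((1:ℝ)/2)) from by ring]
    rw [halfadd, halfadd, halfadd]
  have cube : ∀ z : ℝ≥0∞, (z ^ ((1:ℝ)/2)) ^ (3:ℝ) = z ^ ((3:ℝ)/2) := by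
    intro z
    rw [← ENNReal.rpow_mul]
    norm_num
  -- compute the J integrals
  have hJ1 : (∫⁻ p, F1 p ^ (3:ℝ) ∂π) = T1 * T2 := by
    have : ∀ p : (Fin d → ℝ) × (Fin d → ℝ),
        F1 p ^ (3:ℝ) = (g1 ∘ (fun t => x + t)) p.1 * (g2 ∘ (fun t => x + t)) p.2 := by
      intro p
      simp only [hF1, cube, ENNReal.mul_rpow_of_nonneg _ _ (by norm_num : (0:ℝ) ≤ 3/2),
        Function.comp, hg1, hg2, hAdef, hBdef]
    rw [lintegral_congr this, lintegral_prod_mul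
      ((mg1.comp (measurable_const_add x)).aemeasurable)
      ((mg2.comp (measurable_const_add x)).aemeasurable)]
    rw [hT1, hT2]
    congr 1
    · exact lintegral_add_left_eq_self g1 x
    · exact lintegral_add_left_eq_self g2 x
  have hJ2 : (∫⁻ p, F2 p ^ (3:ℝ) ∂π) = T2 * T3 := by
    have hpt : ∀ p : (Fin d → ℝ) × (Fin d → ℝ),
        F2 p ^ (3:ℝ) = g2 (x + p.2) * g3 ((x + p.2) + p.1) := by
      intro p
      simp only [hF2, cube, ENNReal.mul_rpow_of_nonneg _ _ (by norm_num : (0:ℝ) ≤ 3/2),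
        hg2, hg3, hBdef, hCdef]
      congr 3
      abel
    rw [lintegral_congr hpt, lintegral_prod_symm
      (fun p : (Fin d → ℝ) × (Fin d → ℝ) => g2 (x + p.2) * g3 ((x + p.2) + p.1))
      (((mg2.comp ((measurable_const_add x).comp measurable_snd)).mul
        (mg3.comp (((measurable_const_add x).comp measurable_snd).add
          measurable_fst))).aemeasurable)]
    calc ∫⁻ t2, ∫⁻ t1, g2 (x + t2) * g3 ((x + t2) + t1) ∂μ ∂μ
        = ∫⁻ t2, g2 (x + t2) * ∫⁻ t1, g3 ((x + t2) + t1) ∂μ ∂μ := by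
          refine lintegral_congr fun t2 => ?_
          exact lintegral_const_mul _ (mg3.comp (measurable_const_add _))
      _ = ∫⁻ t2, g2 (x + t2) * T3 ∂μ := by
          refine lintegral_congr fun t2 => ?_
          rw [lintegral_add_left_eq_self g3 (x + t2), hT3]
      _ = (∫⁻ t2, g2 (x + t2) ∂μ) * T3 := lintegral_mul_const _ (mg2.comp (measurable_const_add x))
      _ = T2 * T3 := by rw [hT2, lintegral_add_left_eq_self g2 x]
  have hJ3 : (∫⁻ p, F3 p ^ (3:ℝ) ∂π) = T3 * T1 := by
    have hpt : ∀ p : (Fin d → ℝ) × (Fin d → ℝ),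
        F3 p ^ (3:ℝ) = g3 ((x + p.1) + p.2) * g1 (x + p.1) := by
      intro p
      simp only [hF3, cube, ENNReal.mul_rpow_of_nonneg _ _ (by norm_num : (0:ℝ) ≤ 3/2),
        hg3, hg1, hAdef, hCdef]
      congr 3
      abel
    rw [lintegral_congr hpt, lintegral_prod
      (fun p : (Fin d → ℝ) × (Fin d → ℝ) => g3 ((x + p.1) + p.2) * g1 (x + p.1))
      (((mg3.comp (((measurable_const_add x).comp measurable_fst).add measurable_snd)).mul
        (mg1.comp ((measurable_const_add x).comp measurable_fst))).aemeasurable)]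
    calc ∫⁻ t1, ∫⁻ t2, g3 ((x + t1) + t2) * g1 (x + t1) ∂μ ∂μ
        = ∫⁻ t1, (∫⁻ t2, g3 ((x + t1) + t2) ∂μ) * g1 (x + t1) ∂μ := by
          refine lintegral_congr fun t1 => ?_
          exact lintegral_mul_const _ (mg3.comp (measurable_const_add _))
      _ = ∫⁻ t1, T3 * g1 (x + t1) ∂μ := by
          refine lintegral_congr fun t1 => ?_
          rw [lintegral_add_left_eq_self g3 (x + t1), hT3]
      _ = T3 * ∫⁻ t1, g1 (x + t1) ∂μ := lintegral_const_mul _ (mg1.comp (measurable_const_add x))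
      _ = T3 * T1 := by rw [hT1, lintegral_add_left_eq_self g1 x]
  -- Hölder
  have hH2 : (∫⁻ p, (F2 p * F3 p) ^ ((3:ℝ)/2) ∂π)
      ≤ ((∫⁻ p, F2 p ^ (3:ℝ) ∂π) ^ ((1:ℝ)/2)) * ((∫⁻ p, F3 p ^ (3:ℝ) ∂π) ^ ((1:ℝ)/2)) := by
    have hpt : ∀ p, (F2 p * F3 p) ^ ((3:ℝ)/2)
        = ((fun q => F2 q ^ ((3:ℝ)/2)) * (fun q => F3 q ^ ((3:ℝ)/2))) p := by
      intro p
      simp only [Pi.mul_apply, ENNReal.mul_rpow_of_nonneg _ _ (by norm_num : (0:ℝ) ≤ 3/2)]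
    have hsq : ∀ z : ℝ≥0∞, (z ^ ((3:ℝ)/2)) ^ (2:ℝ) = z ^ (3:ℝ) := by
      intro z; rw [← ENNReal.rpow_mul]; norm_num
    calc (∫⁻ p, (F2 p * F3 p) ^ ((3:ℝ)/2) ∂π)
        = ∫⁻ p, ((fun q => F2 q ^ ((3:ℝ)/2)) * (fun q => F3 q ^ ((3:ℝ)/2))) p ∂π :=
          lintegral_congr hpt
      _ ≤ (∫⁻ p, (F2 p ^ ((3:ℝ)/2)) ^ (2:ℝ) ∂π) ^ ((1:ℝ)/2)
            * (∫⁻ p, (F3 p ^ ((3:ℝ)/2)) ^ (2:ℝ) ∂π) ^ ((1:ℝ)/2) :=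
          ENNReal.lintegral_mul_le_Lp_mul_Lq π ⟨by norm_num, by norm_num, by norm_num⟩
            (mF2.pow_const _).aemeasurable (mF3.pow_const _).aemeasurable
      _ = ((∫⁻ p, F2 p ^ (3:ℝ) ∂π) ^ ((1:ℝ)/2)) * ((∫⁻ p, F3 p ^ (3:ℝ) ∂π) ^ ((1:ℝ)/2)) := by
          congr 1 <;> · congr 1; exact lintegral_congr fun p => hsq _
  have hH1 : I ≤ ((∫⁻ p, F1 p ^ (3:ℝ) ∂π) ^ ((1:ℝ)/3))
      * ((∫⁻ p, (F2 p * F3 p) ^ ((3:ℝ)/2) ∂π) ^ ((1:ℝ)/(3/2)) ) := by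
    calc I = ∫⁻ p, (F1 * fun q => F2 q * F3 q) p ∂π := by
          rw [hIdef]; exact lintegral_congr fun p => by
            simpa [Pi.mul_apply] using hsplit p
      _ ≤ (∫⁻ p, F1 p ^ (3:ℝ) ∂π) ^ ((1:ℝ)/3)
            * (∫⁻ p, (F2 p * F3 p) ^ ((3:ℝ)/2) ∂π) ^ ((1:ℝ)/(3/2)) := by
          have := ENNReal.lintegral_mul_le_Lp_mul_Lq π
            (⟨by norm_num, by norm_num, by norm_num⟩ : Real.HolderConjugate 3 (3/2))
            mF1.aemeasurable (mF2.mul mF3).aemeasurable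
          simpa using this
  -- assemble
  have alg : ∀ a b c : ℝ≥0∞,
      (a*b) ^ ((1:ℝ)/3) * ((b*c) ^ ((1:ℝ)/2) * (c*a) ^ ((1:ℝ)/2)) ^ ((1:ℝ)/(3/2))
        = a ^ ((2:ℝ)/3) * b ^ ((2:ℝ)/3) * c ^ ((2:ℝ)/3) := by
    intro a b c
    have third : ∀ z : ℝ≥0∞, z ^ ((2:ℝ)/3) = z ^ ((1:ℝ)/3) * z ^ ((1:ℝ)/3) := by
      intro z
      rw [← ENNReal.rpow_add_of_nonneg _ _ (by norm_num) (by norm_num)]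
      norm_num
    rw [show ((1:ℝ)/(3/2)) = 2/3 by norm_num,
      ENNReal.mul_rpow_of_nonneg _ _ (by norm_num : (0:ℝ) ≤ 1/3),
      ENNReal.mul_rpow_of_nonneg _ _ (by norm_num : (0:ℝ) ≤ 2/3),
      ← ENNReal.rpow_mul (b*c), ← ENNReal.rpow_mul (c*a),
      show ((1:ℝ)/2 * (2/3)) = 1/3 by norm_num,
      ENNReal.mul_rpow_of_nonneg b c (by norm_num : (0:ℝ) ≤ 1/3),
      ENNReal.mul_rpow_of_nonneg c a (by norm_num : (0:ℝ) ≤ 1/3),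
      third a, third b, third c]
    ring
  have key : I ≤ eLpNorm f01 (3/2) volume * eLpNorm f10 (3/2) volume
      * eLpNorm f11 (3/2) volume := by
    calc I ≤ ((∫⁻ p, F1 p ^ (3:ℝ) ∂π) ^ ((1:ℝ)/3))
        * ((∫⁻ p, (F2 p * F3 p) ^ ((3:ℝ)/2) ∂π) ^ ((1:ℝ)/(3/2))) := hH1
      _ ≤ ((T1*T2) ^ ((1:ℝ)/3))
          * (((T2*T3) ^ ((1:ℝ)/2) * (T3*T1) ^ ((1:ℝ)/2)) ^ ((1:ℝ)/(3/2))) := by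
          rw [hJ1]
          refine mul_le_mul_right ?_ _
          refine ENNReal.rpow_le_rpow ?_ (by norm_num)
          rw [← hJ2, ← hJ3]
          exact hH2
      _ = T1 ^ ((2:ℝ)/3) * T2 ^ ((2:ℝ)/3) * T3 ^ ((2:ℝ)/3) := alg T1 T2 T3
      _ = _ := by rw [hN1, hN2, hN3]
  have hfin : eLpNorm f01 (3/2) volume * eLpNorm f10 (3/2) volume
      * eLpNorm f11 (3/2) volume ≠ ⊤ :=
    ENNReal.mul_ne_top (ENNReal.mul_ne_top L01.2.ne L10.2.ne) L11.2.ne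
  -- relate D2 to I
  set L : (Fin d → ℝ) → ℝ≥0∞ := fun t1 => ∫⁻ t2, φ (t1, t2) ∂μ with hLdef
  have mL : Measurable L := mφ.lintegral_prod_right'
  have hg : ∀ t1 : Fin d → ℝ,
      (∫ t2, f01 (x + t1) * f10 (x + t2) * f11 (x + t1 + t2) ∂μ) = (L t1).toReal := by
    intro t1
    have hnn : (0 : (Fin d → ℝ) → ℝ) ≤ᶠ[ae μ]
        fun t2 => f01 (x + t1) * f10 (x + t2) * f11 (x + t1 + t2) :=
      Eventually.of_forall fun t2 =>
        mul_nonneg (mul_nonneg (h01 _) (h10 _)) (h11 _)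
    rw [integral_eq_lintegral_of_nonneg_ae hnn
      (((measurable_const.mul (m10.comp (measurable_const_add x))).mul
        (m11.comp (measurable_const_add (x + t1)))).aestronglyMeasurable)]
    simp only [hLdef]
    congr 1
    refine lintegral_congr fun t2 => ?_
    rw [ENNReal.ofReal_mul (by have := h01 (x + t1); have := h10 (x + t2); positivity),
      ENNReal.ofReal_mul (h01 _),
      ← Real.enorm_eq_ofReal (h01 _), ← Real.enorm_eq_ofReal (h10 _),
      ← Real.enorm_eq_ofReal (h11 _)]
    simp only [hLdef, hφdef, hAdef, hBdef, hCdef, add_assoc]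
    rfl
  have hD2eq : D2 d f01 f10 f11 x = (∫⁻ t1, ENNReal.ofReal ((L t1).toReal) ∂μ).toReal := by
    have h1 : D2 d f01 f10 f11 x = ∫ t1, (L t1).toReal ∂μ := by
      simp only [D2]
      exact integral_congr_ae (Eventually.of_forall hg)
    rw [h1, integral_eq_lintegral_of_nonneg_ae
      (Eventually.of_forall fun t1 => ENNReal.toReal_nonneg)
      (ENNReal.measurable_toReal.comp mL).aestronglyMeasurable]
  have hmono : (∫⁻ t1, ENNReal.ofReal ((L t1).toReal) ∂μ) ≤ I := by
    rw [hIdef, lintegral_prod φ mφ.aemeasurable]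
    exact lintegral_mono fun t1 => ENNReal.ofReal_toReal_le
  calc D2 d f01 f10 f11 x
      = (∫⁻ t1, ENNReal.ofReal ((L t1).toReal) ∂μ).toReal := hD2eq
    _ ≤ (eLpNorm f01 (3/2) volume * eLpNorm f10 (3/2) volume
        * eLpNorm f11 (3/2) volume).toReal :=
        ENNReal.toReal_mono hfin (hmono.trans key)
    _ = (eLpNorm f01 (3/2) volume).toReal * (eLpNorm f10 (3/2) volume).toReal
        * (eLpNorm f11 (3/2) volume).toReal := by
        rw [ENNReal.toReal_mul, ENNReal.toReal_mul]
    _ ≤ 1 * (eLpNorm f01 (3/2) volume).toReal * (eLpNorm f10 (3/2) volume).toReal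
        * (eLpNorm f11 (3/2) volume).toReal := by rw [one_mul]
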